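/- Let 1 ≤ d₁ < d₂ ≤ 2(q−1) with d₁ ≢ d₂ (mod q−1). There exists a homogeneous polynomial f ∈ S of degree d₁ whose coefficient of x₂^{d₁} is nonzero and such that ev(f) ∈ PRM_{d₂}(q,2) if and only if d₁ ≥ q. -/

import Mathlib

open MvPolynomial

/-- The fixed representatives of the points of the projective plane over `F`:
the leftmost nonzero coordinate equals 1. -/
def stdRep (F : Type*) [Field F] : Set (Fin 3 → F) :=
  {v | v 0 = 1 ∨ (v 0 = 0 ∧ v 1 = 1) ∨ (v 0 = 0 ∧ v 1 = 0 ∧ v 2 = 1)}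

/-- The evaluation map at the fixed representatives. -/
noncomputable def ev (F : Type*) [Field F] :
    MvPolynomial (Fin 3) F →ₗ[F] (stdRep F → F) :=
  LinearMap.pi fun Q => (aeval (Q : Fin 3 → F)).toLinearMap

/-- The projective Reed–Muller code of degree `d` over the projective plane. -/
noncomputable def PRM (F : Type*) [Field F] (d : ℕ) : Submodule F (stdRep F → F) :=
  (homogeneousSubmodule (Fin 3) F d).map (ev F)

section AuxPRM

open Finset

variable {F : Type*} [Field F] [Fintype F]
set_option linter.unusedSectionVars false

lemma PRMaux.mem1 (y z : F) : ![1,y,z] ∈ stdRep F := Or.inl rfl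
lemma PRMaux.mem2 (z : F) : ![0,1,z] ∈ stdRep F := Or.inr (Or.inl ⟨rfl, rfl⟩)
lemma PRMaux.mem3 : (![0,0,1] : Fin 3 → F) ∈ stdRep F := Or.inr (Or.inr ⟨rfl, rfl, rfl⟩)

lemma PRMaux.ev_apply (p : MvPolynomial (Fin 3) F) (Q : stdRep F) :
    ev F p Q = eval (Q : Fin 3 → F) p := by
  show aeval _ p = _
  rw [aeval_def, Algebra.algebraMap_self]
  rfl

lemma PRMaux.sum_pow_ne (e : ℕ) (h : ¬ (Fintype.card F - 1) ∣ e) : ∑ x : F, x ^ e = 0 := by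
  classical
  have he : e ≠ 0 := fun h0 => h (h0 ▸ dvd_zero _)
  let φ : Fˣ ↪ F := ⟨fun x ↦ x, Units.val_injective⟩
  have huniv : univ.map φ = univ \ {0} := by
    ext x
    simpa only [mem_map, mem_univ, Function.Embedding.coeFn_mk, true_and, mem_sdiff,
      mem_singleton, φ] using (show (∃ a : Fˣ, (a : F) = x) ↔ ¬x = 0 from isUnit_iff_ne_zero)
  calc
    ∑ x : F, x ^ e = ∑ x ∈ univ \ {(0 : F)}, x ^ e := by
      rw [← sum_sdiff ({0} : Finset F).subset_univ, sum_singleton, zero_pow he, add_zero]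
    _ = ∑ x : Fˣ, (x ^ e : F) := by simp [φ, ← huniv, univ.sum_map φ]
    _ = 0 := by rw [FiniteField.sum_pow_units F e, if_neg h]

lemma PRMaux.sum_pow_dvd (e : ℕ) (he : e ≠ 0) (h : (Fintype.card F - 1) ∣ e) :
    ∑ x : F, x ^ e = -1 := by
  classical
  let φ : Fˣ ↪ F := ⟨fun x ↦ x, Units.val_injective⟩
  have huniv : univ.map φ = univ \ {0} := by
    ext x
    simpa only [mem_map, mem_univ, Function.Embedding.coeFn_mk, true_and, mem_sdiff,
      mem_singleton, φ] using (show (∃ a : Fˣ, (a : F) = x) ↔ ¬x = 0 from isUnit_iff_ne_zero)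
  calc
    ∑ x : F, x ^ e = ∑ x ∈ univ \ {(0 : F)}, x ^ e := by
      rw [← sum_sdiff ({0} : Finset F).subset_univ, sum_singleton, zero_pow he, add_zero]
    _ = ∑ x : Fˣ, (x ^ e : F) := by simp [φ, ← huniv, univ.sum_map φ]
    _ = -1 := by rw [FiniteField.sum_pow_units F e, if_pos h]

lemma PRMaux.sum_pow_zero : ∑ x : F, x ^ 0 = 0 := by
  have h2 : 1 < Fintype.card F := Fintype.one_lt_card
  exact FiniteField.sum_pow_lt_card_sub_one (K := F) 0 (by omega)

lemma PRMaux.pow_red (x : F) (m : ℕ) (hm : m ≠ 0) : x ^ (m + (Fintype.card F - 1)) = x ^ m := by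
  rcases eq_or_ne x 0 with rfl | hx
  · rw [zero_pow hm, zero_pow (by omega)]
  · rw [pow_add, FiniteField.pow_card_sub_one_eq_one x hx, mul_one]

lemma PRMaux.deg3 (u : Fin 3 →₀ ℕ) : u.degree = u 0 + u 1 + u 2 := by
  rw [Finsupp.degree_apply, Finset.sum_subset (Finset.subset_univ u.support)
    (fun i _ hi => Finsupp.notMem_support_iff.mp hi), Fin.sum_univ_three]

end AuxPRM

/-- The discriminating linear functional. -/
noncomputable def Lam (F : Type*) [Field F] [Fintype F] (s t : ℕ) (c : F) :
    (stdRep F → F) →ₗ[F] F :=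
  (∑ y : F, ∑ z : F, (y ^ s * z ^ t) • LinearMap.proj (⟨![1,y,z], PRMaux.mem1 y z⟩ : stdRep F))
  + (∑ z : F, (z ^ t) • LinearMap.proj (⟨![0,1,z], PRMaux.mem2 z⟩ : stdRep F))
  + c • LinearMap.proj (⟨![0,0,1], PRMaux.mem3⟩ : stdRep F)

section Aux2

open Finset

variable {F : Type*} [Field F] [Fintype F]
set_option linter.unusedSectionVars false

lemma PRMaux.Lam_monomial (s t : ℕ) (c : F) (u : Fin 3 →₀ ℕ) (a : F) :
    Lam F s t c (ev F (monomial u a)) =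
      a * ((∑ y : F, y ^ (u 1 + s)) * (∑ z : F, z ^ (u 2 + t))
        + (0:F) ^ u 0 * (∑ z : F, z ^ (u 2 + t))
        + c * ((0:F) ^ u 0 * (0:F) ^ u 1)) := by
  have hval : ∀ Q : stdRep F, ev F (monomial u a) Q =
      a * ((Q : Fin 3 → F) 0 ^ u 0 * ((Q : Fin 3 → F) 1 ^ u 1 * (Q : Fin 3 → F) 2 ^ u 2)) := by
    intro Q
    rw [PRMaux.ev_apply, eval_monomial, Finsupp.prod_pow, Fin.prod_univ_three, mul_assoc]
  simp only [Lam, LinearMap.add_apply, LinearMap.sum_apply, LinearMap.smul_apply,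
    LinearMap.proj_apply, smul_eq_mul, hval]
  simp only [Matrix.cons_val_zero, Matrix.cons_val_one, Matrix.head_cons, one_pow]
  have h2 : ∀ (x y z : F), (![x,y,z] : Fin 3 → F) 2 = z := fun _ _ _ => rfl
  simp only [h2, pow_add]
  simp only [Finset.sum_mul, Finset.mul_sum, mul_add]
  congr 1
  · congr 1
    · rw [Finset.sum_comm]
      exact Finset.sum_congr rfl fun y _ => Finset.sum_congr rfl fun z _ => by ring
    · exact Finset.sum_congr rfl fun z _ => by ring
  · ring

lemma PRMaux.Lam_ev_eq (s t : ℕ) (c : F) (p : MvPolynomial (Fin 3) F) :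
    Lam F s t c (ev F p) = ∑ u ∈ p.support, coeff u p *
      ((∑ y : F, y ^ (u 1 + s)) * (∑ z : F, z ^ (u 2 + t))
        + (0:F) ^ u 0 * (∑ z : F, z ^ (u 2 + t))
        + c * ((0:F) ^ u 0 * (0:F) ^ u 1)) := by
  conv_lhs => rw [← support_sum_monomial_coeff p]
  rw [map_sum, map_sum]
  exact Finset.sum_congr rfl fun u _ => PRMaux.Lam_monomial s t c u _

end Aux2

/-- Let `1 ≤ d₁ < d₂ ≤ 2(q−1)` with `d₁ ≢ d₂ (mod q−1)`. There is a
homogeneous polynomial `f` of degree `d₁` with nonzero coefficient on `x₂^{d₁}` and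
`ev(f) ∈ PRM_{d₂}(q,2)` if and only if `d₁ ≥ q`. -/
theorem stmt5 {F : Type*} [Field F] [Fintype F] (q d₁ d₂ : ℕ)
    (hq : Fintype.card F = q) (h1 : 1 ≤ d₁) (h12 : d₁ < d₂) (h2 : d₂ ≤ 2 * (q - 1))
    (hmod : ¬ d₁ ≡ d₂ [MOD q - 1]) :
    (∃ f : MvPolynomial (Fin 3) F, f ∈ homogeneousSubmodule (Fin 3) F d₁ ∧
      coeff (Finsupp.single 2 d₁) f ≠ 0 ∧ ev F f ∈ PRM F d₂) ↔ q ≤ d₁ := by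
  classical
  have hq2 : 2 ≤ q := by
    have := Fintype.one_lt_card (α := F); omega
  have hq3 : 3 ≤ q := by
    by_contra h
    have hq1 : q - 1 = 1 := by omega
    exact hmod (by rw [hq1]; exact Nat.modEq_one)
  have hndvd : ¬ (q - 1) ∣ (d₂ - d₁) := by
    intro hdvd
    exact hmod ((Nat.modEq_iff_dvd' (le_of_lt h12)).2 hdvd)
  -- specialized sum lemmas
  have Snd : ∀ e : ℕ, ¬ (q - 1) ∣ e → (∑ x : F, x ^ e) = 0 := fun e h =>
    PRMaux.sum_pow_ne e (by rw [hq]; exact h)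
  have Sdv : ∀ e : ℕ, e ≠ 0 → (q - 1) ∣ e → (∑ x : F, x ^ e) = -1 := fun e he h =>
    PRMaux.sum_pow_dvd e he (by rw [hq]; exact h)
  have Slt : ∀ e : ℕ, e < q - 1 → (∑ x : F, x ^ e) = 0 := by
    intro e he
    exact FiniteField.sum_pow_lt_card_sub_one (K := F) e (by rw [hq]; exact he)
  have Sq1 : (∑ x : F, x ^ (q - 1)) = -1 := Sdv _ (by omega) dvd_rfl
  constructor
  · rintro ⟨f, hf, ha, hmem⟩
    by_contra hqd
    push_neg at hqd
    obtain ⟨g, hg, hev⟩ := hmem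
    have hf' : f.IsHomogeneous d₁ := hf
    have hg' : g.IsHomogeneous d₂ := hg
    have hfs : ∀ u ∈ f.support, u 0 + u 1 + u 2 = d₁ := by
      intro u hu
      have hd : u.degree = d₁ := by
        by_contra hne
        exact mem_support_iff.mp hu (hf'.coeff_eq_zero hne)
      rw [PRMaux.deg3] at hd; exact hd
    have hgs : ∀ u ∈ g.support, u 0 + u 1 + u 2 = d₂ := by
      intro u hu
      have hd : u.degree = d₂ := by
        by_contra hne
        exact mem_support_iff.mp hu (hg'.coeff_eq_zero hne)
      rw [PRMaux.deg3] at hd; exact hd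
    rcases Nat.lt_or_ge (d₂ - d₁) (q - 1) with hc | hc
    · -- Case AB : d₂ - d₁ ≤ q - 2
      have hLg : Lam F (q - 1 - (d₂ - d₁)) (q - 1 - d₁) 0 (ev F g) = 0 := by
        rw [PRMaux.Lam_ev_eq]
        apply Finset.sum_eq_zero
        intro u hu
        have hdeg := hgs u hu
        rw [mul_eq_zero]; right
        by_cases hγ : u 2 = d₁
        · by_cases hβ : u 1 = d₂ - d₁
          · have hα : u 0 = 0 := by omega
            rw [hα, hβ, hγ, show d₂ - d₁ + (q - 1 - (d₂ - d₁)) = q - 1 from by omega,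
              show d₁ + (q - 1 - d₁) = q - 1 from by omega, Sq1, pow_zero]
            ring
          · have hSb : (∑ y : F, y ^ (u 1 + (q - 1 - (d₂ - d₁)))) = 0 := by
              apply Slt; omega
            have hSa : (0:F) ^ u 0 = 0 := zero_pow (by omega)
            rw [hSb, hSa]; ring
        · have hS : (∑ z : F, z ^ (u 2 + (q - 1 - d₁))) = 0 := by
            rcases Nat.eq_zero_or_pos (u 2 + (q - 1 - d₁)) with h0 | hpos
            · rw [h0]; exact PRMaux.sum_pow_zero
            · apply Snd
              intro hdvd
              obtain ⟨m, hm⟩ := hdvd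
              have hr : u 2 + (q - 1 - d₁) < 3 * (q - 1) := by omega
              rw [hm, Nat.mul_comm 3 (q-1)] at hr
              have hm3 : m < 3 := Nat.lt_of_mul_lt_mul_left hr
              interval_cases m <;> omega
          rw [hS]; ring
      have hLf : Lam F (q - 1 - (d₂ - d₁)) (q - 1 - d₁) 0 (ev F f) =
          - coeff (Finsupp.single 2 d₁) f := by
        rw [PRMaux.Lam_ev_eq]
        rw [Finset.sum_eq_single (Finsupp.single 2 d₁)]
        · have e0 : (Finsupp.single (2 : Fin 3) d₁) 0 = 0 := by
            rw [Finsupp.single_apply]; simp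
          have e1 : (Finsupp.single (2 : Fin 3) d₁) 1 = 0 := by
            rw [Finsupp.single_apply]; simp
          have e2 : (Finsupp.single (2 : Fin 3) d₁) 2 = d₁ := by
            rw [Finsupp.single_apply]; simp
          rw [e0, e1, e2, pow_zero, zero_add,
            show d₁ + (q - 1 - d₁) = q - 1 from by omega, Sq1,
            Slt (q - 1 - (d₂ - d₁)) (by omega)]
          ring
        · intro u hu hne
          have hdeg := hfs u hu
          rw [mul_eq_zero]; right
          by_cases hγ : u 2 = d₁
          · exfalso
            apply hne
            have hα : u 0 = 0 := by omega
            have hβ : u 1 = 0 := by omega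
            apply Finsupp.ext
            intro i
            fin_cases i <;> simp [Finsupp.single_apply, hα, hβ, hγ]
          · have hS : (∑ z : F, z ^ (u 2 + (q - 1 - d₁))) = 0 := by
              apply Slt; omega
            rw [hS]; ring
        · intro hns
          rw [notMem_support_iff.mp hns]; ring
      rw [hev, hLf] at hLg
      exact ha (neg_eq_zero.mp hLg)
    · -- Case C : d₂ - d₁ ≥ q
      have hcq : q ≤ d₂ - d₁ := by
        rcases Nat.lt_or_ge (d₂ - d₁) q with h | h
        · exfalso; exact hndvd (by rw [show d₂ - d₁ = q - 1 from by omega])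
        · exact h
      have hLg : Lam F 0 (2 * (q - 1) - d₂) 1 (ev F g) = 0 := by
        rw [PRMaux.Lam_ev_eq]
        apply Finset.sum_eq_zero
        intro u hu
        have hdeg := hgs u hu
        rw [mul_eq_zero]; right
        by_cases hγd : u 2 = d₂
        · have hα : u 0 = 0 := by omega
          have hβ : u 1 = 0 := by omega
          rw [hα, hβ, hγd, pow_zero, Nat.add_zero,
            show d₂ + (2 * (q - 1) - d₂) = 2 * (q - 1) from by omega,
            Sdv (2 * (q - 1)) (by omega) ⟨2, by ring⟩, PRMaux.sum_pow_zero]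
          ring
        · by_cases hγe : u 2 = d₂ - (q - 1)
          · have hSt : (∑ z : F, z ^ (u 2 + (2 * (q - 1) - d₂))) = -1 := by
              rw [show u 2 + (2 * (q - 1) - d₂) = q - 1 from by omega]; exact Sq1
            by_cases hα : u 0 = 0
            · have hβ : u 1 = q - 1 := by omega
              rw [hα, hβ, hSt, pow_zero, Nat.add_zero, Sq1, zero_pow (show q - 1 ≠ 0 by omega)]
              ring
            · have h0 : (0:F) ^ u 0 = 0 := zero_pow hα
              have hSb : (∑ y : F, y ^ (u 1 + 0)) = 0 := by
                rw [Nat.add_zero]; apply Slt; omega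
              rw [h0, hSb, hSt]; ring
          · have hSt : (∑ z : F, z ^ (u 2 + (2 * (q - 1) - d₂))) = 0 := by
              rcases Nat.eq_zero_or_pos (u 2 + (2 * (q - 1) - d₂)) with h0 | hpos
              · rw [h0]; exact PRMaux.sum_pow_zero
              · apply Snd
                intro hdvd
                obtain ⟨m, hm⟩ := hdvd
                have hr : u 2 + (2 * (q - 1) - d₂) < 3 * (q - 1) := by omega
                rw [hm, Nat.mul_comm 3 (q-1)] at hr
                have hm3 : m < 3 := Nat.lt_of_mul_lt_mul_left hr
                interval_cases m <;> omega
            have hab : (0:F) ^ u 0 * (0:F) ^ u 1 = 0 := by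
              have h01 : u 0 ≠ 0 ∨ u 1 ≠ 0 := by omega
              rcases h01 with h | h
              · rw [zero_pow h, zero_mul]
              · rw [zero_pow h, mul_zero]
            rw [hSt, hab]; ring
      have hLf : Lam F 0 (2 * (q - 1) - d₂) 1 (ev F f) = coeff (Finsupp.single 2 d₁) f := by
        rw [PRMaux.Lam_ev_eq]
        rw [Finset.sum_eq_single (Finsupp.single 2 d₁)]
        · have e0 : (Finsupp.single (2 : Fin 3) d₁) 0 = 0 := by
            rw [Finsupp.single_apply]; simp
          have e1 : (Finsupp.single (2 : Fin 3) d₁) 1 = 0 := by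
            rw [Finsupp.single_apply]; simp
          have e2 : (Finsupp.single (2 : Fin 3) d₁) 2 = d₁ := by
            rw [Finsupp.single_apply]; simp
          rw [e0, e1, e2, pow_zero, Nat.add_zero,
            Slt (d₁ + (2 * (q - 1) - d₂)) (by omega), PRMaux.sum_pow_zero]
          ring
        · intro u hu hne
          have hdeg := hfs u hu
          rw [mul_eq_zero]; right
          by_cases hγ : u 2 = d₁
          · exfalso
            apply hne
            have hα : u 0 = 0 := by omega
            have hβ : u 1 = 0 := by omega
            apply Finsupp.ext
            intro i
            fin_cases i <;> simp [Finsupp.single_apply, hα, hβ, hγ]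
          · have hS : (∑ z : F, z ^ (u 2 + (2 * (q - 1) - d₂))) = 0 := by
              apply Slt; omega
            have hab : (0:F) ^ u 0 * (0:F) ^ u 1 = 0 := by
              have h01 : u 0 ≠ 0 ∨ u 1 ≠ 0 := by omega
              rcases h01 with h | h
              · rw [zero_pow h, zero_mul]
              · rw [zero_pow h, mul_zero]
            rw [hS, hab]; ring
        · intro hns
          rw [notMem_support_iff.mp hns]; ring
      rw [hev, hLf] at hLg
      exact ha hLg
  · intro hd1
    -- abbreviations (as plain numbers)
    have hK1 : 1 ≤ d₂ - d₁ := by omega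
    have hK2 : d₂ - d₁ ≤ q - 2 := by omega
    have hPR : ∀ (x : F) (m : ℕ), m ≠ 0 → x ^ (m + (q - 1)) = x ^ m := by
      intro x m hm
      have := PRMaux.pow_red x m hm
      rwa [hq] at this
    refine ⟨X 2 ^ d₁ + X 1 ^ (q - 1 - (d₂ - d₁)) * X 2 ^ (d₂ - (q - 1)), ?_, ?_, ?_⟩
    · rw [mem_homogeneousSubmodule]
      refine (isHomogeneous_X_pow (R := F) (2 : Fin 3) d₁).add ?_
      have h := (isHomogeneous_X_pow (R := F) (1 : Fin 3) (q - 1 - (d₂ - d₁))).mul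
        (isHomogeneous_X_pow (R := F) (2 : Fin 3) (d₂ - (q - 1)))
      rwa [show q - 1 - (d₂ - d₁) + (d₂ - (q - 1)) = d₁ from by omega] at h
    · rw [coeff_add]
      have c1 : coeff (Finsupp.single 2 d₁) (X 2 ^ d₁ : MvPolynomial (Fin 3) F) = 1 := by
        rw [coeff_X_pow]; simp
      have c2 : coeff (Finsupp.single 2 d₁)
          (X 1 ^ (q - 1 - (d₂ - d₁)) * X 2 ^ (d₂ - (q - 1)) : MvPolynomial (Fin 3) F) = 0 := by
        rw [X_pow_eq_monomial, X_pow_eq_monomial, monomial_mul, coeff_monomial, if_neg]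
        intro h
        have h1 := DFunLike.congr_fun h 1
        simp [Finsupp.single_apply] at h1
        omega
      rw [c1, c2]; norm_num
    · refine Submodule.mem_map.mpr
        ⟨X 2 ^ d₂ + X 1 ^ ((d₂ - d₁) + (q - 1)) * X 2 ^ (d₁ - (q - 1))
          + X 0 ^ (d₂ - d₁) * (X 1 ^ (q - 1 - (d₂ - d₁)) * X 2 ^ (d₂ - (q - 1)))
          + X 0 ^ ((d₂ - d₁) + (q - 1)) * X 2 ^ (d₁ - (q - 1))
          - X 0 ^ (q - 1) * X 2 ^ (d₂ - (q - 1))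
          - X 0 ^ (q - 1) * (X 1 ^ (d₂ - d₁) * X 2 ^ (d₁ - (q - 1))), ?_, ?_⟩
      · rw [mem_homogeneousSubmodule]
        have m1 : ((X 2 ^ d₂ : MvPolynomial (Fin 3) F)).IsHomogeneous d₂ :=
          isHomogeneous_X_pow (R := F) (2 : Fin 3) d₂
        have m2 : ((X 1 ^ ((d₂ - d₁) + (q - 1)) * X 2 ^ (d₁ - (q - 1)) :
            MvPolynomial (Fin 3) F)).IsHomogeneous d₂ := by
          have h := (isHomogeneous_X_pow (R := F) (1 : Fin 3) ((d₂ - d₁) + (q - 1))).mul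
            (isHomogeneous_X_pow (R := F) (2 : Fin 3) (d₁ - (q - 1)))
          rwa [show (d₂ - d₁) + (q - 1) + (d₁ - (q - 1)) = d₂ from by omega] at h
        have m3 : ((X 0 ^ (d₂ - d₁) * (X 1 ^ (q - 1 - (d₂ - d₁)) * X 2 ^ (d₂ - (q - 1))) :
            MvPolynomial (Fin 3) F)).IsHomogeneous d₂ := by
          have h := (isHomogeneous_X_pow (R := F) (0 : Fin 3) (d₂ - d₁)).mul
            ((isHomogeneous_X_pow (R := F) (1 : Fin 3) (q - 1 - (d₂ - d₁))).mul
              (isHomogeneous_X_pow (R := F) (2 : Fin 3) (d₂ - (q - 1))))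
          rwa [show (d₂ - d₁) + ((q - 1 - (d₂ - d₁)) + (d₂ - (q - 1))) = d₂ from by omega] at h
        have m4 : ((X 0 ^ ((d₂ - d₁) + (q - 1)) * X 2 ^ (d₁ - (q - 1)) :
            MvPolynomial (Fin 3) F)).IsHomogeneous d₂ := by
          have h := (isHomogeneous_X_pow (R := F) (0 : Fin 3) ((d₂ - d₁) + (q - 1))).mul
            (isHomogeneous_X_pow (R := F) (2 : Fin 3) (d₁ - (q - 1)))
          rwa [show (d₂ - d₁) + (q - 1) + (d₁ - (q - 1)) = d₂ from by omega] at h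
        have m5 : ((X 0 ^ (q - 1) * X 2 ^ (d₂ - (q - 1)) :
            MvPolynomial (Fin 3) F)).IsHomogeneous d₂ := by
          have h := (isHomogeneous_X_pow (R := F) (0 : Fin 3) (q - 1)).mul
            (isHomogeneous_X_pow (R := F) (2 : Fin 3) (d₂ - (q - 1)))
          rwa [show (q - 1) + (d₂ - (q - 1)) = d₂ from by omega] at h
        have m6 : ((X 0 ^ (q - 1) * (X 1 ^ (d₂ - d₁) * X 2 ^ (d₁ - (q - 1))) :
            MvPolynomial (Fin 3) F)).IsHomogeneous d₂ := by
          have h := (isHomogeneous_X_pow (R := F) (0 : Fin 3) (q - 1)).mul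
            ((isHomogeneous_X_pow (R := F) (1 : Fin 3) (d₂ - d₁)).mul
              (isHomogeneous_X_pow (R := F) (2 : Fin 3) (d₁ - (q - 1))))
          rwa [show (q - 1) + ((d₂ - d₁) + (d₁ - (q - 1))) = d₂ from by omega] at h
        exact (((m1.add m2).add m3).add m4).sub m5 |>.sub m6
      · funext Q
        obtain ⟨v, hv⟩ := Q
        rw [PRMaux.ev_apply, PRMaux.ev_apply]
        simp only [map_add, map_sub, map_mul, map_pow, eval_X]
        have e1 : v 2 ^ d₂ = v 2 ^ (d₂ - (q - 1)) := by
          conv_lhs => rw [show d₂ = (d₂ - (q - 1)) + (q - 1) from by omega]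
          exact hPR _ _ (by omega)
        have e2 : v 2 ^ d₁ = v 2 ^ (d₁ - (q - 1)) := by
          conv_lhs => rw [show d₁ = (d₁ - (q - 1)) + (q - 1) from by omega]
          exact hPR _ _ (by omega)
        have e3 : v 1 ^ ((d₂ - d₁) + (q - 1)) = v 1 ^ (d₂ - d₁) := hPR _ _ (by omega)
        obtain hv0 | ⟨hv0, hv1⟩ | ⟨hv0, hv1, hv2⟩ := hv
        · rw [hv0, e1, e2, e3, one_pow, one_pow, one_pow]
          ring
        · rw [hv0, hv1, e1, e2, one_pow, one_pow,
            zero_pow (show d₂ - d₁ ≠ 0 by omega),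
            zero_pow (show (d₂ - d₁) + (q - 1) ≠ 0 by omega),
            zero_pow (show q - 1 ≠ 0 by omega)]
          ring
        · rw [hv0, hv1, hv2, one_pow, one_pow, one_pow,
            zero_pow (show d₂ - d₁ ≠ 0 by omega),
            zero_pow (show (d₂ - d₁) + (q - 1) ≠ 0 by omega),
            zero_pow (show q - 1 ≠ 0 by omega),
            zero_pow (show q - 1 - (d₂ - d₁) ≠ 0 by omega)]
          ring
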